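/- Let G be a connected F-free finite simple graph that is not a clique, and suppose V(G) admits no partition into three sets U, C1, C2 such that every vertex of U is adjacent to all other vertices of G, C1 and C2 both induce cliques, and there is no edge between C1 and C2. Then every maximal strong module M of G that is adjacent in the quotient graph Q̃(G) to more than two other maximal strong modules consists of a single vertex of G. -/

import Mathlib

open SimpleGraph

/-- `M` is a module of `G`: every vertex outside `M` is adjacent to all
vertices of `M` or to none of them. -/
def IsModule {V : Type*} (G : SimpleGraph V) (M : Set V) : Prop :=
  ∀ x ∉ M, (∀ a ∈ M, G.Adj x a) ∨ (∀ a ∈ M, ¬ G.Adj x a)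

/-- A module is strong if it overlaps no other module. -/
def IsStrongModule {V : Type*} (G : SimpleGraph V) (M : Set V) : Prop :=
  IsModule G M ∧
    ∀ M' : Set V, IsModule G M' → (M ∩ M').Nonempty → M ⊆ M' ∨ M' ⊆ M

/-- A nonempty strong module ≠ V(G) whose only proper strong superset is V(G). -/
def IsMaximalStrongModule {V : Type*} (G : SimpleGraph V) (M : Set V) : Prop :=
  IsStrongModule G M ∧ M.Nonempty ∧ M ≠ Set.univ ∧
    ∀ M' : Set V, IsStrongModule G M' → M ⊂ M' → M' = Set.univ

/-- Quotient graph defined by a family `P` of vertex sets: two members are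
adjacent iff they are distinct and completely adjacent in `G`. -/
def QuotientOn {V : Type*} (G : SimpleGraph V) (P : Set (Set V)) : SimpleGraph P where
  Adj A B := A ≠ B ∧ ∀ a ∈ (A : Set V), ∀ b ∈ (B : Set V), G.Adj a b
  symm := by
    constructor
    intro A B h
    exact ⟨Ne.symm h.1, fun b hb a ha => (h.2 a ha b hb).symm⟩
  loopless := by
    constructor
    intro A h
    exact h.1 rfl

/-- The quotient graph Q̃(G), on the maximal strong modules of `G`. -/
def QuotientGraph {V : Type*} (G : SimpleGraph V) :
    SimpleGraph {M : Set V | IsMaximalStrongModule G M} :=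
  QuotientOn G {M : Set V | IsMaximalStrongModule G M}

/-- A graph is prime if it has at least four vertices and all its modules are
trivial (empty, singletons, or the whole vertex set). -/
def IsPrimeGraph {W : Type*} (H : SimpleGraph W) : Prop :=
  4 ≤ Nat.card W ∧
    ∀ M : Set W, IsModule H M → M = ∅ ∨ M = Set.univ ∨ ∃ w, M = {w}

/-- `G` contains an induced copy of `H`. -/
def HasInducedCopy {W V : Type*} (H : SimpleGraph W) (G : SimpleGraph V) : Prop :=
  ∃ f : W ↪ V, ∀ a b : W, G.Adj (f a) (f b) ↔ H.Adj a b

/-- The path on four vertices. -/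
def GraphP4 : SimpleGraph (Fin 4) :=
  SimpleGraph.fromRel fun a b =>
    (a, b) ∈ ([(0, 1), (1, 2), (2, 3)] : List (Fin 4 × Fin 4))

/-- The cycle on four vertices. -/
def GraphC4 : SimpleGraph (Fin 4) :=
  SimpleGraph.fromRel fun a b =>
    (a, b) ∈ ([(0, 1), (1, 2), (2, 3), (0, 3)] : List (Fin 4 × Fin 4))

/-- The bull: triangle 0,1,2 with pendant 3 at 0 and pendant 4 at 2. -/
def GraphBull : SimpleGraph (Fin 5) :=
  SimpleGraph.fromRel fun a b =>
    (a, b) ∈ ([(0, 1), (0, 2), (1, 2), (0, 3), (2, 4)] : List (Fin 5 × Fin 5))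

/-- The dart: triangle 0,1,2; vertex 4 adjacent exactly to 0 and 2;
vertex 3 adjacent exactly to 0. -/
def GraphDart : SimpleGraph (Fin 5) :=
  SimpleGraph.fromRel fun a b =>
    (a, b) ∈ ([(0, 1), (0, 2), (1, 2), (0, 4), (2, 4), (0, 3)] : List (Fin 5 × Fin 5))

/-- The fox: adjacent vertices 0,1 and pairwise nonadjacent 2,3,4, each
adjacent to both 0 and 1 (K5 minus a triangle). -/
def GraphFox : SimpleGraph (Fin 5) :=
  SimpleGraph.fromRel fun a b =>
    (a, b) ∈ ([(0, 1), (0, 2), (0, 3), (0, 4), (1, 2), (1, 3), (1, 4)] : List (Fin 5 × Fin 5))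

/-- The gem: induced path 0-1-2-3 plus vertex 4 adjacent to all of them. -/
def GraphGem : SimpleGraph (Fin 5) :=
  SimpleGraph.fromRel fun a b =>
    (a, b) ∈ ([(0, 1), (1, 2), (2, 3), (0, 4), (1, 4), (2, 4), (3, 4)] : List (Fin 5 × Fin 5))

/-- `G` has no induced subgraph isomorphic to a member of
F = {C4, bull, dart, fox, gem}. -/
def FFree {V : Type*} (G : SimpleGraph V) : Prop :=
  ¬ HasInducedCopy GraphC4 G ∧ ¬ HasInducedCopy GraphBull G ∧
  ¬ HasInducedCopy GraphDart G ∧ ¬ HasInducedCopy GraphFox G ∧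
  ¬ HasInducedCopy GraphGem G

/-- `X` is an association set of `G`: the graph `G - X` has no induced `P₃`,
i.e., every component of `G - X` is a clique. -/
def IsAssociationSet {V : Type*} (G : SimpleGraph V) (X : Set V) : Prop :=
  ∀ a b c : V, a ∉ X → b ∉ X → c ∉ X →
    G.Adj a b → G.Adj b c → a ≠ c → G.Adj a c

/-- `X` is a dissociation set of `G`: the graph `G - X` has no `P₃` subgraph,
i.e., every component of `G - X` has at most two vertices. -/
def IsDissociationSet {V : Type*} (G : SimpleGraph V) (X : Set V) : Prop :=
  ∀ a b c : V, a ∉ X → b ∉ X → c ∉ X → G.Adj a b → G.Adj b c → a = c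

/-- Minimum cardinality of an association set of `G`. -/
noncomputable def optAsso {V : Type*} (G : SimpleGraph V) : ℕ :=
  sInf {n : ℕ | ∃ X : Set V, IsAssociationSet G X ∧ X.ncard = n}

/-- Minimum cardinality of a dissociation set of `G`. -/
noncomputable def optDiss {V : Type*} (G : SimpleGraph V) : ℕ :=
  sInf {n : ℕ | ∃ X : Set V, IsDissociationSet G X ∧ X.ncard = n}

instance : DecidableRel GraphC4.Adj :=
  fun a b => decidable_of_iff _ (SimpleGraph.fromRel_adj _ a b).symm
instance : DecidableRel GraphBull.Adj :=
  fun a b => decidable_of_iff _ (SimpleGraph.fromRel_adj _ a b).symm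
instance : DecidableRel GraphDart.Adj :=
  fun a b => decidable_of_iff _ (SimpleGraph.fromRel_adj _ a b).symm
instance : DecidableRel GraphFox.Adj :=
  fun a b => decidable_of_iff _ (SimpleGraph.fromRel_adj _ a b).symm
instance : DecidableRel GraphGem.Adj :=
  fun a b => decidable_of_iff _ (SimpleGraph.fromRel_adj _ a b).symm

section Copies
variable {V : Type*} {G : SimpleGraph V}
lemma copyC4 {p0 p1 p2 p3 : V}
    (e01 : p0 ≠ p1) (e02 : p0 ≠ p2) (e03 : p0 ≠ p3) (e12 : p1 ≠ p2) (e13 : p1 ≠ p3) (e23 : p2 ≠ p3) (h01 : G.Adj p0 p1) (n02 : ¬ G.Adj p0 p2) (h03 : G.Adj p0 p3) (h12 : G.Adj p1 p2) (n13 : ¬ G.Adj p1 p3) (h23 : G.Adj p2 p3) :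
    HasInducedCopy GraphC4 G := by
  refine ⟨⟨![p0,p1,p2,p3], ?_⟩, ?_⟩
  · intro i j hij
    fin_cases i <;> fin_cases j
    · rfl
    · exact absurd hij e01
    · exact absurd hij e02
    · exact absurd hij e03
    · exact absurd hij e01.symm
    · rfl
    · exact absurd hij e12
    · exact absurd hij e13
    · exact absurd hij e02.symm
    · exact absurd hij e12.symm
    · rfl
    · exact absurd hij e23
    · exact absurd hij e03.symm
    · exact absurd hij e13.symm
    · exact absurd hij e23.symm
    · rfl
  · intro i j
    fin_cases i <;> fin_cases j
    · exact iff_of_false (G.loopless.irrefl _) (by decide)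
    · exact iff_of_true h01 (by decide)
    · exact iff_of_false n02 (by decide)
    · exact iff_of_true h03 (by decide)
    · exact iff_of_true h01.symm (by decide)
    · exact iff_of_false (G.loopless.irrefl _) (by decide)
    · exact iff_of_true h12 (by decide)
    · exact iff_of_false n13 (by decide)
    · exact iff_of_false (fun h => n02 h.symm) (by decide)
    · exact iff_of_true h12.symm (by decide)
    · exact iff_of_false (G.loopless.irrefl _) (by decide)
    · exact iff_of_true h23 (by decide)
    · exact iff_of_true h03.symm (by decide)
    · exact iff_of_false (fun h => n13 h.symm) (by decide)
    · exact iff_of_true h23.symm (by decide)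
    · exact iff_of_false (G.loopless.irrefl _) (by decide)

lemma copyBull {p0 p1 p2 p3 p4 : V}
    (e01 : p0 ≠ p1) (e02 : p0 ≠ p2) (e03 : p0 ≠ p3) (e04 : p0 ≠ p4) (e12 : p1 ≠ p2) (e13 : p1 ≠ p3) (e14 : p1 ≠ p4) (e23 : p2 ≠ p3) (e24 : p2 ≠ p4) (e34 : p3 ≠ p4) (h01 : G.Adj p0 p1) (h02 : G.Adj p0 p2) (h03 : G.Adj p0 p3) (n04 : ¬ G.Adj p0 p4) (h12 : G.Adj p1 p2) (n13 : ¬ G.Adj p1 p3) (n14 : ¬ G.Adj p1 p4) (n23 : ¬ G.Adj p2 p3) (h24 : G.Adj p2 p4) (n34 : ¬ G.Adj p3 p4) :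
    HasInducedCopy GraphBull G := by
  refine ⟨⟨![p0,p1,p2,p3,p4], ?_⟩, ?_⟩
  · intro i j hij
    fin_cases i <;> fin_cases j
    · rfl
    · exact absurd hij e01
    · exact absurd hij e02
    · exact absurd hij e03
    · exact absurd hij e04
    · exact absurd hij e01.symm
    · rfl
    · exact absurd hij e12
    · exact absurd hij e13
    · exact absurd hij e14
    · exact absurd hij e02.symm
    · exact absurd hij e12.symm
    · rfl
    · exact absurd hij e23
    · exact absurd hij e24
    · exact absurd hij e03.symm
    · exact absurd hij e13.symm
    · exact absurd hij e23.symm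
    · rfl
    · exact absurd hij e34
    · exact absurd hij e04.symm
    · exact absurd hij e14.symm
    · exact absurd hij e24.symm
    · exact absurd hij e34.symm
    · rfl
  · intro i j
    fin_cases i <;> fin_cases j
    · exact iff_of_false (G.loopless.irrefl _) (by decide)
    · exact iff_of_true h01 (by decide)
    · exact iff_of_true h02 (by decide)
    · exact iff_of_true h03 (by decide)
    · exact iff_of_false n04 (by decide)
    · exact iff_of_true h01.symm (by decide)
    · exact iff_of_false (G.loopless.irrefl _) (by decide)
    · exact iff_of_true h12 (by decide)
    · exact iff_of_false n13 (by decide)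
    · exact iff_of_false n14 (by decide)
    · exact iff_of_true h02.symm (by decide)
    · exact iff_of_true h12.symm (by decide)
    · exact iff_of_false (G.loopless.irrefl _) (by decide)
    · exact iff_of_false n23 (by decide)
    · exact iff_of_true h24 (by decide)
    · exact iff_of_true h03.symm (by decide)
    · exact iff_of_false (fun h => n13 h.symm) (by decide)
    · exact iff_of_false (fun h => n23 h.symm) (by decide)
    · exact iff_of_false (G.loopless.irrefl _) (by decide)
    · exact iff_of_false n34 (by decide)
    · exact iff_of_false (fun h => n04 h.symm) (by decide)
    · exact iff_of_false (fun h => n14 h.symm) (by decide)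
    · exact iff_of_true h24.symm (by decide)
    · exact iff_of_false (fun h => n34 h.symm) (by decide)
    · exact iff_of_false (G.loopless.irrefl _) (by decide)

lemma copyDart {p0 p1 p2 p3 p4 : V}
    (e01 : p0 ≠ p1) (e02 : p0 ≠ p2) (e03 : p0 ≠ p3) (e04 : p0 ≠ p4) (e12 : p1 ≠ p2) (e13 : p1 ≠ p3) (e14 : p1 ≠ p4) (e23 : p2 ≠ p3) (e24 : p2 ≠ p4) (e34 : p3 ≠ p4) (h01 : G.Adj p0 p1) (h02 : G.Adj p0 p2) (h03 : G.Adj p0 p3) (h04 : G.Adj p0 p4) (h12 : G.Adj p1 p2) (n13 : ¬ G.Adj p1 p3) (n14 : ¬ G.Adj p1 p4) (n23 : ¬ G.Adj p2 p3) (h24 : G.Adj p2 p4) (n34 : ¬ G.Adj p3 p4) :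
    HasInducedCopy GraphDart G := by
  refine ⟨⟨![p0,p1,p2,p3,p4], ?_⟩, ?_⟩
  · intro i j hij
    fin_cases i <;> fin_cases j
    · rfl
    · exact absurd hij e01
    · exact absurd hij e02
    · exact absurd hij e03
    · exact absurd hij e04
    · exact absurd hij e01.symm
    · rfl
    · exact absurd hij e12
    · exact absurd hij e13
    · exact absurd hij e14
    · exact absurd hij e02.symm
    · exact absurd hij e12.symm
    · rfl
    · exact absurd hij e23
    · exact absurd hij e24
    · exact absurd hij e03.symm
    · exact absurd hij e13.symm
    · exact absurd hij e23.symm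
    · rfl
    · exact absurd hij e34
    · exact absurd hij e04.symm
    · exact absurd hij e14.symm
    · exact absurd hij e24.symm
    · exact absurd hij e34.symm
    · rfl
  · intro i j
    fin_cases i <;> fin_cases j
    · exact iff_of_false (G.loopless.irrefl _) (by decide)
    · exact iff_of_true h01 (by decide)
    · exact iff_of_true h02 (by decide)
    · exact iff_of_true h03 (by decide)
    · exact iff_of_true h04 (by decide)
    · exact iff_of_true h01.symm (by decide)
    · exact iff_of_false (G.loopless.irrefl _) (by decide)
    · exact iff_of_true h12 (by decide)
    · exact iff_of_false n13 (by decide)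
    · exact iff_of_false n14 (by decide)
    · exact iff_of_true h02.symm (by decide)
    · exact iff_of_true h12.symm (by decide)
    · exact iff_of_false (G.loopless.irrefl _) (by decide)
    · exact iff_of_false n23 (by decide)
    · exact iff_of_true h24 (by decide)
    · exact iff_of_true h03.symm (by decide)
    · exact iff_of_false (fun h => n13 h.symm) (by decide)
    · exact iff_of_false (fun h => n23 h.symm) (by decide)
    · exact iff_of_false (G.loopless.irrefl _) (by decide)
    · exact iff_of_false n34 (by decide)
    · exact iff_of_true h04.symm (by decide)
    · exact iff_of_false (fun h => n14 h.symm) (by decide)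
    · exact iff_of_true h24.symm (by decide)
    · exact iff_of_false (fun h => n34 h.symm) (by decide)
    · exact iff_of_false (G.loopless.irrefl _) (by decide)

lemma copyFox {p0 p1 p2 p3 p4 : V}
    (e01 : p0 ≠ p1) (e02 : p0 ≠ p2) (e03 : p0 ≠ p3) (e04 : p0 ≠ p4) (e12 : p1 ≠ p2) (e13 : p1 ≠ p3) (e14 : p1 ≠ p4) (e23 : p2 ≠ p3) (e24 : p2 ≠ p4) (e34 : p3 ≠ p4) (h01 : G.Adj p0 p1) (h02 : G.Adj p0 p2) (h03 : G.Adj p0 p3) (h04 : G.Adj p0 p4) (h12 : G.Adj p1 p2) (h13 : G.Adj p1 p3) (h14 : G.Adj p1 p4) (n23 : ¬ G.Adj p2 p3) (n24 : ¬ G.Adj p2 p4) (n34 : ¬ G.Adj p3 p4) :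
    HasInducedCopy GraphFox G := by
  refine ⟨⟨![p0,p1,p2,p3,p4], ?_⟩, ?_⟩
  · intro i j hij
    fin_cases i <;> fin_cases j
    · rfl
    · exact absurd hij e01
    · exact absurd hij e02
    · exact absurd hij e03
    · exact absurd hij e04
    · exact absurd hij e01.symm
    · rfl
    · exact absurd hij e12
    · exact absurd hij e13
    · exact absurd hij e14
    · exact absurd hij e02.symm
    · exact absurd hij e12.symm
    · rfl
    · exact absurd hij e23
    · exact absurd hij e24
    · exact absurd hij e03.symm
    · exact absurd hij e13.symm
    · exact absurd hij e23.symm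
    · rfl
    · exact absurd hij e34
    · exact absurd hij e04.symm
    · exact absurd hij e14.symm
    · exact absurd hij e24.symm
    · exact absurd hij e34.symm
    · rfl
  · intro i j
    fin_cases i <;> fin_cases j
    · exact iff_of_false (G.loopless.irrefl _) (by decide)
    · exact iff_of_true h01 (by decide)
    · exact iff_of_true h02 (by decide)
    · exact iff_of_true h03 (by decide)
    · exact iff_of_true h04 (by decide)
    · exact iff_of_true h01.symm (by decide)
    · exact iff_of_false (G.loopless.irrefl _) (by decide)
    · exact iff_of_true h12 (by decide)
    · exact iff_of_true h13 (by decide)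
    · exact iff_of_true h14 (by decide)
    · exact iff_of_true h02.symm (by decide)
    · exact iff_of_true h12.symm (by decide)
    · exact iff_of_false (G.loopless.irrefl _) (by decide)
    · exact iff_of_false n23 (by decide)
    · exact iff_of_false n24 (by decide)
    · exact iff_of_true h03.symm (by decide)
    · exact iff_of_true h13.symm (by decide)
    · exact iff_of_false (fun h => n23 h.symm) (by decide)
    · exact iff_of_false (G.loopless.irrefl _) (by decide)
    · exact iff_of_false n34 (by decide)
    · exact iff_of_true h04.symm (by decide)
    · exact iff_of_true h14.symm (by decide)
    · exact iff_of_false (fun h => n24 h.symm) (by decide)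
    · exact iff_of_false (fun h => n34 h.symm) (by decide)
    · exact iff_of_false (G.loopless.irrefl _) (by decide)

lemma copyGem {p0 p1 p2 p3 p4 : V}
    (e01 : p0 ≠ p1) (e02 : p0 ≠ p2) (e03 : p0 ≠ p3) (e04 : p0 ≠ p4) (e12 : p1 ≠ p2) (e13 : p1 ≠ p3) (e14 : p1 ≠ p4) (e23 : p2 ≠ p3) (e24 : p2 ≠ p4) (e34 : p3 ≠ p4) (h01 : G.Adj p0 p1) (n02 : ¬ G.Adj p0 p2) (n03 : ¬ G.Adj p0 p3) (h04 : G.Adj p0 p4) (h12 : G.Adj p1 p2) (n13 : ¬ G.Adj p1 p3) (h14 : G.Adj p1 p4) (h23 : G.Adj p2 p3) (h24 : G.Adj p2 p4) (h34 : G.Adj p3 p4) :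
    HasInducedCopy GraphGem G := by
  refine ⟨⟨![p0,p1,p2,p3,p4], ?_⟩, ?_⟩
  · intro i j hij
    fin_cases i <;> fin_cases j
    · rfl
    · exact absurd hij e01
    · exact absurd hij e02
    · exact absurd hij e03
    · exact absurd hij e04
    · exact absurd hij e01.symm
    · rfl
    · exact absurd hij e12
    · exact absurd hij e13
    · exact absurd hij e14
    · exact absurd hij e02.symm
    · exact absurd hij e12.symm
    · rfl
    · exact absurd hij e23
    · exact absurd hij e24
    · exact absurd hij e03.symm
    · exact absurd hij e13.symm
    · exact absurd hij e23.symm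
    · rfl
    · exact absurd hij e34
    · exact absurd hij e04.symm
    · exact absurd hij e14.symm
    · exact absurd hij e24.symm
    · exact absurd hij e34.symm
    · rfl
  · intro i j
    fin_cases i <;> fin_cases j
    · exact iff_of_false (G.loopless.irrefl _) (by decide)
    · exact iff_of_true h01 (by decide)
    · exact iff_of_false n02 (by decide)
    · exact iff_of_false n03 (by decide)
    · exact iff_of_true h04 (by decide)
    · exact iff_of_true h01.symm (by decide)
    · exact iff_of_false (G.loopless.irrefl _) (by decide)
    · exact iff_of_true h12 (by decide)
    · exact iff_of_false n13 (by decide)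
    · exact iff_of_true h14 (by decide)
    · exact iff_of_false (fun h => n02 h.symm) (by decide)
    · exact iff_of_true h12.symm (by decide)
    · exact iff_of_false (G.loopless.irrefl _) (by decide)
    · exact iff_of_true h23 (by decide)
    · exact iff_of_true h24 (by decide)
    · exact iff_of_false (fun h => n03 h.symm) (by decide)
    · exact iff_of_false (fun h => n13 h.symm) (by decide)
    · exact iff_of_true h23.symm (by decide)
    · exact iff_of_false (G.loopless.irrefl _) (by decide)
    · exact iff_of_true h34 (by decide)
    · exact iff_of_true h04.symm (by decide)
    · exact iff_of_true h14.symm (by decide)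
    · exact iff_of_true h24.symm (by decide)
    · exact iff_of_true h34.symm (by decide)
    · exact iff_of_false (G.loopless.irrefl _) (by decide)
end Copies
section Util
variable {V : Type*} {G : SimpleGraph V}

lemma isModule_all {M : Set V} (hM : IsModule G M) {u w : V} (hu : u ∉ M) (hw : w ∈ M)
    (h : G.Adj u w) : ∀ w' ∈ M, G.Adj u w' := by
  rcases hM u hu with hall | hnone
  · exact hall
  · exact absurd h (hnone w hw)

lemma isModule_none {M : Set V} (hM : IsModule G M) {u w : V} (hu : u ∉ M) (hw : w ∈ M)
    (h : ¬ G.Adj u w) : ∀ w' ∈ M, ¬ G.Adj u w' := by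
  rcases hM u hu with hall | hnone
  · exact absurd (hall w hw) h
  · exact hnone

lemma msm_disjoint {M M' : Set V} (hM : IsMaximalStrongModule G M)
    (hM' : IsMaximalStrongModule G M') (hne : M ≠ M') : ∀ v ∈ M, v ∉ M' := by
  intro v hv hv'
  rcases hM.1.2 M' hM'.1.1 ⟨v, hv, hv'⟩ with h | h
  · exact hM'.2.2.1 (hM.2.2.2 M' hM'.1 (Set.ssubset_iff_subset_ne.mpr ⟨h, hne⟩))
  · exact hM.2.2.1 (hM'.2.2.2 M hM.1 (Set.ssubset_iff_subset_ne.mpr ⟨h, hne.symm⟩))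

lemma isModule_union {A B : Set V} (hA : IsModule G A) (hB : IsModule G B)
    (hab : (A ∩ B).Nonempty) : IsModule G (A ∪ B) := by
  obtain ⟨c, hcA, hcB⟩ := hab
  intro v hv
  have hvA : v ∉ A := fun h => hv (Or.inl h)
  have hvB : v ∉ B := fun h => hv (Or.inr h)
  rcases hA v hvA with hA1 | hA0
  · left
    intro w hw
    rcases hw with hw | hw
    · exact hA1 w hw
    · exact isModule_all hB hvB hcB (hA1 c hcA) w hw
  · right
    intro w hw
    rcases hw with hw | hw
    · exact hA0 w hw
    · exact isModule_none hB hvB hcB (hA0 c hcA) w hw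

lemma isModule_diff {A B : Set V} (hA : IsModule G A) (hB : IsModule G B)
    (hBA : (B \ A).Nonempty) : IsModule G (A \ B) := by
  obtain ⟨t, htB, htA⟩ := hBA
  intro v hv
  by_cases hvA : v ∈ A
  · have hvB : v ∈ B := by
      by_contra h; exact hv ⟨hvA, h⟩
    rcases hA t htA with ht1 | ht0
    · left
      intro w hw
      rcases hB w hw.2 with hw1 | hw0
      · exact (hw1 v hvB).symm
      · exact absurd (ht1 w hw.1).symm (hw0 t htB)
    · right
      intro w hw
      rcases hB w hw.2 with hw1 | hw0
      · exact fun hc => (ht0 w hw.1) (hw1 t htB).symm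
      · exact fun hc => (hw0 v hvB) hc.symm
  · rcases hA v hvA with h1 | h0
    · exact Or.inl fun w hw => h1 w hw.1
    · exact Or.inr fun w hw => h0 w hw.1

lemma reach_mem {H : SimpleGraph V} {P : Set V}
    (hP : ∀ ⦃v w : V⦄, v ∈ P → H.Adj v w → w ∈ P) {a v : V}
    (ha : a ∈ P) (h : H.Reachable a v) : v ∈ P := by
  obtain ⟨w⟩ := h
  induction w with
  | nil => exact ha
  | cons h' p ih => exact ih (hP ha h')

lemma two_module_partition (hG : G.Connected) (hGc : Gᶜ.Connected) {A B : Set V}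
    (hA : IsModule G A) (hB : IsModule G B) (hAne : A.Nonempty) (hBne : B.Nonempty)
    (hdisj : ∀ v ∈ A, v ∉ B) (hcover : ∀ v : V, v ∈ A ∨ v ∈ B) : False := by
  obtain ⟨a, ha⟩ := hAne
  obtain ⟨b, hb⟩ := hBne
  have cross : ∀ p ∈ A, ∀ q ∈ B, (G.Adj p q ↔ G.Adj a b) := by
    intro p hp q hq
    have h1 : G.Adj p q ↔ G.Adj p b := by
      rcases hB p (hdisj p hp) with h | h
      · exact iff_of_true (h q hq) (h b hb)
      · exact iff_of_false (h q hq) (h b hb)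
    have hbA : b ∉ A := fun hc => hdisj b hc hb
    have h2 : G.Adj p b ↔ G.Adj a b := by
      rcases hA b hbA with h | h
      · exact iff_of_true (h p hp).symm (h a ha).symm
      · exact iff_of_false (fun hc => h p hp hc.symm) (fun hc => h a ha hc.symm)
    exact h1.trans h2
  by_cases hadj : G.Adj a b
  · -- complete between A and B : co-G disconnected
    have hclosed : ∀ ⦃v w : V⦄, v ∈ A → Gᶜ.Adj v w → w ∈ A := by
      intro v w hv hvw
      rcases hcover w with h | h
      · exact h
      · exact absurd ((cross v hv w h).mpr hadj) hvw.2
    exact hdisj b (reach_mem hclosed ha (hGc.preconnected a b)) hb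
  · have hclosed : ∀ ⦃v w : V⦄, v ∈ A → G.Adj v w → w ∈ A := by
      intro v w hv hvw
      rcases hcover w with h | h
      · exact h
      · exact absurd ((cross v hv w h).mp hvw) hadj
    exact hdisj b (reach_mem hclosed ha (hG.preconnected a b)) hb

lemma G4 [Fintype V] (hG : G.Connected) (hGc : Gᶜ.Connected) {M W : Set V}
    (hM : IsMaximalStrongModule G M) (hW : IsModule G W) (hMW : M ⊆ W) (hne : M ≠ W) :
    W = Set.univ := by
  classical
  by_contra hWu
  have key : ∀ k : ℕ, ∀ W' : Set V, IsModule G W' → M ⊆ W' → M ≠ W' → W' ≠ Set.univ →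
      (Set.univ \ W').ncard ≤ k → False := by
    intro k
    induction k with
    | zero =>
      intro W' _ _ _ h4 h5
      have : (Set.univ \ W') = ∅ :=
        (Set.ncard_eq_zero (Set.toFinite _)).mp (Nat.le_zero.mp h5)
      exact h4 (Set.eq_univ_of_univ_subset (Set.diff_eq_empty.mp this))
    | succ n ih =>
      intro W' hW' hMW' hneW' hWu' hle
      have hnotstrong : ¬ (∀ Z : Set V, IsModule G Z → (W' ∩ Z).Nonempty → W' ⊆ Z ∨ Z ⊆ W') := by
        intro hs
        exact hWu' (hM.2.2.2 W' ⟨hW', hs⟩ (Set.ssubset_iff_subset_ne.mpr ⟨hMW', hneW'⟩))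
      push_neg at hnotstrong
      obtain ⟨Z, hZmod, hover, hn1, hn2⟩ := hnotstrong
      obtain ⟨z, hzZ, hzW⟩ := Set.not_subset.mp hn2
      obtain ⟨w0, hw0W, hw0Z⟩ := Set.not_subset.mp hn1
      have hUmod : IsModule G (W' ∪ Z) := isModule_union hW' hZmod hover
      by_cases huV : W' ∪ Z = Set.univ
      · -- partition V = W' ⊔ (Z \ W')
        have hDmod : IsModule G (Z \ W') := isModule_diff hZmod hW' ⟨w0, hw0W, hw0Z⟩
        refine two_module_partition hG hGc hW' hDmod ⟨w0, hw0W⟩ ⟨z, hzZ, hzW⟩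
          (fun v hv hv2 => hv2.2 hv) ?_
        intro v
        have : v ∈ W' ∪ Z := huV ▸ Set.mem_univ v
        rcases this with h | h
        · exact Or.inl h
        · by_cases hv : v ∈ W'
          · exact Or.inl hv
          · exact Or.inr ⟨h, hv⟩
      · refine ih (W' ∪ Z) hUmod (hMW'.trans Set.subset_union_left) ?_ huV ?_
        · intro hc
          exact hzW (hMW' (hc ▸ (Set.mem_union_right W' hzZ)))
        · have hss : (Set.univ \ (W' ∪ Z)) ⊂ (Set.univ \ W') := by
            constructor
            · exact Set.diff_subset_diff_right Set.subset_union_left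
            · intro hc
              exact (hc ⟨Set.mem_univ z, fun h => hzW h⟩).2 (Set.mem_union_right W' hzZ)
          have := Set.ncard_lt_ncard hss (Set.toFinite _)
          omega
  exact key (Set.univ \ W).ncard W hW hMW hne hWu le_rfl
end Util
section LemL
variable {V : Type*} {G : SimpleGraph V}

lemma lemL (S : Set V)
    (h3 : ∀ p q r : V, p ∈ S → q ∈ S → r ∈ S → p ≠ q → p ≠ r → q ≠ r →
      ¬ G.Adj p q → ¬ G.Adj p r → ¬ G.Adj q r → False)
    (hP4 : ∀ p q r s : V, p ∈ S → q ∈ S → r ∈ S → s ∈ S →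
      p ≠ r → p ≠ s → q ≠ s →
      G.Adj p q → G.Adj q r → G.Adj r s → ¬ G.Adj p r → ¬ G.Adj p s → ¬ G.Adj q s → False)
    (hC4 : ∀ p q r s : V, p ∈ S → q ∈ S → r ∈ S → s ∈ S →
      p ≠ r → q ≠ s →
      G.Adj p q → G.Adj q r → G.Adj r s → G.Adj s p → ¬ G.Adj p r → ¬ G.Adj q s → False) :
    ∃ I X Y : Set V, (I ∪ X ∪ Y = S) ∧ (∀ v ∈ I, v ∉ X) ∧ (∀ v ∈ I, v ∉ Y) ∧
      (∀ v ∈ X, v ∉ Y) ∧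
      (∀ i ∈ I, ∀ v ∈ S, v ≠ i → G.Adj i v) ∧
      (∀ p ∈ X, ∀ q ∈ X, p ≠ q → G.Adj p q) ∧
      (∀ p ∈ Y, ∀ q ∈ Y, p ≠ q → G.Adj p q) ∧
      (∀ p ∈ X, ∀ q ∈ Y, ¬ G.Adj p q) := by
  classical
  by_cases hSI : ∀ v ∈ S, ∀ u ∈ S, u ≠ v → G.Adj v u
  · refine ⟨S, ∅, ∅, by simp, by simp, by simp, by simp, hSI, by simp, by simp, by simp⟩
  · push_neg at hSI
    obtain ⟨a0, ha0S, b0, hb0S, hb0ne, hb0nadj⟩ := hSI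
    set I : Set V := {v | v ∈ S ∧ ∀ u ∈ S, u ≠ v → G.Adj v u} with hI
    set Y : Set V := {v | v ∈ S ∧ v ≠ a0 ∧ ¬ G.Adj v a0} with hYdef
    set X : Set V := {v | v ∈ S ∧ v ∉ I ∧ (v = a0 ∨ G.Adj v a0)} with hXdef
    have ha0I : a0 ∉ I := by
      intro h
      exact hb0nadj (h.2 b0 hb0S hb0ne)
    have hb0Y : b0 ∈ Y := ⟨hb0S, hb0ne, fun h => hb0nadj h.symm⟩
    have hIY : ∀ v ∈ I, v ∉ Y := by
      intro v hv hv2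
      exact hv2.2.2 (hv.2 a0 ha0S (fun h => hv2.2.1 h.symm))
    have hXY : ∀ v ∈ X, v ∉ Y := by
      intro v hv hv2
      rcases hv.2.2 with h | h
      · exact hv2.2.1 h
      · exact hv2.2.2 h
    have hnoadj : ∀ p ∈ X, ∀ q ∈ Y, ¬ G.Adj p q := by
      intro p hp q hq hpq
      rcases hp.2.2 with rfl | hpa0
      · exact hq.2.2 hpq.symm
      have hpI := hp.2.1
      have : ¬ ∀ u ∈ S, u ≠ p → G.Adj p u := fun h => hpI ⟨hp.1, h⟩
      push_neg at this
      obtain ⟨w, hwS, hwne, hwnadj⟩ := this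
      have hwa0 : w ≠ a0 := by
        rintro rfl; exact hwnadj hpa0
      by_cases hwadj : G.Adj w a0
      · by_cases hwy : G.Adj w q
        · exact hC4 a0 p q w ha0S hp.1 hq.1 hwS hq.2.1.symm hwne.symm
            hpa0.symm hpq hwy.symm hwadj (fun h => hq.2.2 h.symm) hwnadj
        · have hwq : w ≠ q := by
            rintro rfl; exact hwnadj hpq
          exact hP4 w a0 p q hwS ha0S hp.1 hq.1 hwne hwq hq.2.1.symm
            hwadj hpa0.symm hpq (fun h => hwnadj h.symm) hwy (fun h => hq.2.2 h.symm)
      · by_cases hyw : G.Adj q w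
        · exact hP4 a0 p q w ha0S hp.1 hq.1 hwS hq.2.1.symm hwa0.symm hwne.symm
            hpa0.symm hpq hyw (fun h => hq.2.2 h.symm) (fun h => hwadj h.symm) hwnadj
        · have hwq : w ≠ q := by
            rintro rfl; exact hwnadj hpq
          exact h3 q w a0 hq.1 hwS ha0S hwq.symm hq.2.1 hwa0 hyw hq.2.2 hwadj
    have hYcl : ∀ p ∈ Y, ∀ q ∈ Y, p ≠ q → G.Adj p q := by
      intro p hp q hq hne
      by_contra hnadj
      exact h3 p q a0 hp.1 hq.1 ha0S hne hp.2.1 hq.2.1 hnadj hp.2.2 hq.2.2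
    have hXcl : ∀ p ∈ X, ∀ q ∈ X, p ≠ q → G.Adj p q := by
      intro p hp q hq hne
      by_contra hnadj
      rcases hp.2.2 with rfl | hpa0
      · rcases hq.2.2 with rfl | hqa0
        · exact hne rfl
        · exact hnadj hqa0.symm
      · rcases hq.2.2 with rfl | hqa0
        · exact hnadj hpa0
        · refine h3 p q b0 hp.1 hq.1 hb0S hne ?_ ?_ hnadj
            (hnoadj p hp b0 hb0Y) (hnoadj q hq b0 hb0Y)
          · rintro rfl; exact (hXY p hp) hb0Y
          · rintro rfl; exact (hXY q hq) hb0Y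
    refine ⟨I, X, Y, ?_, fun v hv hvX => hvX.2.1 hv, hIY, hXY, fun i hi => hi.2, hXcl, hYcl, hnoadj⟩
    · ext v
      constructor
      · rintro ((h | h) | h)
        · exact h.1
        · exact h.1
        · exact h.1
      · intro hv
        by_cases hvI : v ∈ I
        · exact Or.inl (Or.inl hvI)
        · by_cases hva : v = a0
          · exact Or.inl (Or.inr ⟨hv, hva ▸ hvI, Or.inl hva⟩)
          · by_cases hvadj : G.Adj v a0
            · exact Or.inl (Or.inr ⟨hv, hvI, Or.inr hvadj⟩)
            · exact Or.inr ⟨hv, hva, hvadj⟩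
end LemL
section Pairs
variable {V : Type*} {G : SimpleGraph V}
lemma pairA (hF : FFree G)
    {a x y u w : V}
    (hax : G.Adj a x) (hay : G.Adj a y) (hxy : G.Adj x y)
    (nua : ¬ G.Adj u a) (hux : G.Adj u x) (nuy : ¬ G.Adj u y)
    (nwa : ¬ G.Adj w a) (nwx : ¬ G.Adj w x) (hwy : G.Adj w y)
    (eua : u ≠ a) (eux : u ≠ x) (euy : u ≠ y) (ewa : w ≠ a) (ewx : w ≠ x) (ewy : w ≠ y) (euw : u ≠ w) : False := by
  by_cases hc : G.Adj u w
  · have huw := hc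
    exact hF.1 (copyC4 hux.ne' ewx.symm hxy.ne huw.ne euy hwy.ne hux.symm (fun h => nwx h.symm) hxy huw nuy hwy)
  · have nuw := hc
    exact hF.2.1 (copyBull hax.ne' hxy.ne hux.ne' ewx.symm hay.ne eua.symm ewa.symm euy.symm hwy.ne' euw hax.symm hxy hux.symm (fun h => nwx h.symm) hay (fun h => nua h.symm) (fun h => nwa h.symm) (fun h => nuy h.symm) hwy.symm nuw)

lemma pairB (hF : FFree G)
    {a x y u w : V}
    (hax : G.Adj a x) (hay : G.Adj a y) (hxy : G.Adj x y)
    (nua : ¬ G.Adj u a) (hux : G.Adj u x) (nuy : ¬ G.Adj u y)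
    (nwa : ¬ G.Adj w a) (hwx : G.Adj w x) (hwy : G.Adj w y)
    (eua : u ≠ a) (eux : u ≠ x) (euy : u ≠ y) (ewa : w ≠ a) (ewx : w ≠ x) (ewy : w ≠ y) (euw : u ≠ w) : False := by
  by_cases hc : G.Adj u w
  · have huw := hc
    exact hF.2.2.2.2 (copyGem huw.ne euy eua hux.ne hwy.ne ewa hwx.ne hay.ne' hxy.ne' hax.ne huw nuy nua hux hwy nwa hwx hay.symm hxy.symm hax)
  · have nuw := hc
    exact hF.2.2.1 (copyDart hwx.ne' hxy.ne hux.ne' hax.ne' hwy.ne euw.symm ewa euy.symm hay.ne' eua hwx.symm hxy hux.symm hax.symm hwy (fun h => nuw h.symm) nwa (fun h => nuy h.symm) hay.symm nua)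

lemma pairC (hF : FFree G)
    {a x y u w : V}
    (hax : G.Adj a x) (hay : G.Adj a y) (hxy : G.Adj x y)
    (nua : ¬ G.Adj u a) (hux : G.Adj u x) (nuy : ¬ G.Adj u y)
    (hwa : G.Adj w a) (hwx : G.Adj w x) (nwy : ¬ G.Adj w y)
    (eua : u ≠ a) (eux : u ≠ x) (euy : u ≠ y) (ewa : w ≠ a) (ewx : w ≠ x) (ewy : w ≠ y) (euw : u ≠ w) : False := by
  by_cases hc : G.Adj u w
  · have huw := hc
    exact hF.2.2.2.2 (copyGem hay.ne' ewy.symm euy.symm hxy.ne' hwa.ne' eua.symm hax.ne huw.ne' hwx.ne hux.ne hay.symm (fun h => nwy h.symm) (fun h => nuy h.symm) hxy.symm hwa.symm (fun h => nua h.symm) hax huw.symm hwx hux)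
  · have nuw := hc
    exact hF.2.2.1 (copyDart hwx.ne' hax.ne' hux.ne' hxy.ne hwa.ne euw.symm ewy eua.symm hay.ne euy hwx.symm hax.symm hux.symm hxy hwa (fun h => nuw h.symm) nwy (fun h => nua h.symm) hay nuy)

lemma pairD (hF : FFree G)
    {a x y u w : V}
    (hax : G.Adj a x) (hay : G.Adj a y) (hxy : G.Adj x y)
    (nua : ¬ G.Adj u a) (hux : G.Adj u x) (nuy : ¬ G.Adj u y)
    (hwa : G.Adj w a) (nwx : ¬ G.Adj w x) (nwy : ¬ G.Adj w y)
    (eua : u ≠ a) (eux : u ≠ x) (euy : u ≠ y) (ewa : w ≠ a) (ewx : w ≠ x) (ewy : w ≠ y) (euw : u ≠ w) : False := by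
  by_cases hc : G.Adj u w
  · have huw := hc
    exact hF.1 (copyC4 huw.ne eua hux.ne hwa.ne ewx hax.ne huw nua hux hwa nwx hax)
  · have nuw := hc
    exact hF.2.1 (copyBull hay.ne hax.ne hwa.ne' eua.symm hxy.ne' ewy.symm euy.symm ewx.symm hux.ne' euw.symm hay hax hwa.symm (fun h => nua h.symm) hxy.symm (fun h => nwy h.symm) (fun h => nuy h.symm) (fun h => nwx h.symm) hux.symm (fun h => nuw h.symm))

lemma pairE (hF : FFree G)
    {a x y u w : V}
    (hax : G.Adj a x) (hay : G.Adj a y) (hxy : G.Adj x y)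
    (hua : G.Adj u a) (hux : G.Adj u x) (nuy : ¬ G.Adj u y)
    (hwa : G.Adj w a) (nwx : ¬ G.Adj w x) (nwy : ¬ G.Adj w y)
    (eua : u ≠ a) (eux : u ≠ x) (euy : u ≠ y) (ewa : w ≠ a) (ewx : w ≠ x) (ewy : w ≠ y) (euw : u ≠ w) : False := by
  by_cases hc : G.Adj u w
  · have huw := hc
    exact hF.2.2.2.2 (copyGem huw.ne' ewx ewy hwa.ne hux.ne euy hua.ne hxy.ne hax.ne' hay.ne' huw.symm nwx nwy hwa hux nuy hua hxy hax.symm hay.symm)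
  · have nuw := hc
    exact hF.2.2.1 (copyDart hua.ne' hax.ne hwa.ne' hay.ne hux.ne euw euy ewx.symm hxy.ne ewy hua.symm hax hwa.symm hay hux nuw nuy (fun h => nwx h.symm) hxy nwy)

lemma pairF (hF : FFree G)
    {a x y u w : V}
    (hax : G.Adj a x) (hay : G.Adj a y) (hxy : G.Adj x y)
    (hua : G.Adj u a) (hux : G.Adj u x) (nuy : ¬ G.Adj u y)
    (hwa : G.Adj w a) (nwx : ¬ G.Adj w x) (hwy : G.Adj w y)
    (eua : u ≠ a) (eux : u ≠ x) (euy : u ≠ y) (ewa : w ≠ a) (ewx : w ≠ x) (ewy : w ≠ y) (euw : u ≠ w) : False := by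
  by_cases hc : G.Adj u w
  · have huw := hc
    exact hF.1 (copyC4 hux.ne' ewx.symm hxy.ne huw.ne euy hwy.ne hux.symm (fun h => nwx h.symm) hxy huw nuy hwy)
  · have nuw := hc
    exact hF.2.2.2.2 (copyGem hwy.ne ewx euw.symm hwa.ne hxy.ne' euy.symm hay.ne' hux.ne' hax.ne' hua.ne hwy nwx (fun h => nuw h.symm) hwa hxy.symm (fun h => nuy h.symm) hay.symm hux.symm hax.symm hua)

lemma pairG (hF : FFree G)
    {a x y u w : V}
    (hax : G.Adj a x) (hay : G.Adj a y) (hxy : G.Adj x y)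
    (hua : G.Adj u a) (hux : G.Adj u x) (nuy : ¬ G.Adj u y)
    (nwa : ¬ G.Adj w a) (hwx : G.Adj w x) (hwy : G.Adj w y)
    (eua : u ≠ a) (eux : u ≠ x) (euy : u ≠ y) (ewa : w ≠ a) (ewx : w ≠ x) (ewy : w ≠ y) (euw : u ≠ w) : False := by
  by_cases hc : G.Adj u w
  · have huw := hc
    exact hF.1 (copyC4 huw.ne euy hua.ne hwy.ne ewa hay.ne' huw nuy hua hwy nwa hay.symm)
  · have nuw := hc
    exact hF.2.2.2.2 (copyGem hua.ne euy euw hux.ne hay.ne ewa.symm hax.ne hwy.ne' hxy.ne' hwx.ne hua nuy nuw hux hay (fun h => nwa h.symm) hax hwy.symm hxy.symm hwx)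
end Pairs
section Split
variable {V : Type*} {G : SimpleGraph V}

lemma cross_full {A B : Set V} (hA : IsModule G A) (hB : IsModule G B)
    (dAB : ∀ v ∈ A, v ∉ B) {p q : V} (hp : p ∈ A) (hq : q ∈ B) (h : G.Adj p q) :
    ∀ p' ∈ A, ∀ q' ∈ B, G.Adj p' q' := by
  have h1 : ∀ q' ∈ B, G.Adj p q' := isModule_all hB (dAB p hp) hq h
  intro p' hp' q' hq'
  exact (isModule_all hA (fun hc => dAB q' hc hq') hp (h1 q' hq').symm p' hp').symm

lemma splitCase [Fintype V] (hG : G.Connected) (hGc : Gᶜ.Connected) (hF : FFree G)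
    {M MA MB : Set V} (hM : IsMaximalStrongModule G M)
    (hAmod : IsModule G MA) (hBmod : IsModule G MB)
    {a x y : V} (ha : a ∈ M) (hx : x ∈ MA) (hy : y ∈ MB)
    (dMA : ∀ v ∈ M, v ∉ MA) (dMB : ∀ v ∈ M, v ∉ MB) (dAB : ∀ v ∈ MA, v ∉ MB)
    (adjMA : ∀ p ∈ M, ∀ q ∈ MA, G.Adj p q) (adjMB : ∀ p ∈ M, ∀ q ∈ MB, G.Adj p q)
    (adjAB : ∀ p ∈ MA, ∀ q ∈ MB, G.Adj p q)
    {v0 : V} (hv0M : v0 ∉ M) (hv0A : v0 ∉ MA) (hv0B : v0 ∉ MB)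
    (hv0x : G.Adj v0 x) (hv0y : ¬ G.Adj v0 y) : False := by
  have hax : G.Adj a x := adjMA a ha x hx
  have hay : G.Adj a y := adjMB a ha y hy
  have hxy : G.Adj x y := adjAB x hx y hy
  have ev0a : v0 ≠ a := fun h => hv0M (h ▸ ha)
  have ev0x : v0 ≠ x := fun h => hv0A (h ▸ hx)
  have ev0y : v0 ≠ y := fun h => hv0B (h ▸ hy)
  by_cases hv0a : G.Adj v0 a
  · -- v0 has pattern (1,1,0) : M ∪ MA is a module
    have hmod : IsModule G (M ∪ MA) := by
      intro v hv
      have hvM : v ∉ M := fun h => hv (Or.inl h)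
      have hvA : v ∉ MA := fun h => hv (Or.inr h)
      by_cases hvB : v ∈ MB
      · left
        rintro c (hc | hc)
        · exact (adjMB c hc v hvB).symm
        · exact (adjAB c hc v hvB).symm
      · have eva : v ≠ a := fun h => hvM (h ▸ ha)
        have evx : v ≠ x := fun h => hvA (h ▸ hx)
        have evy : v ≠ y := fun h => hvB (h ▸ hy)
        rcases hM.1.1 v hvM with hm1 | hm0
        · rcases hAmod v hvA with ha1 | ha0
          · left
            rintro c (hc | hc)
            · exact hm1 c hc
            · exact ha1 c hc
          · by_cases hvy : G.Adj v y
            · exact (pairF hF hax hay hxy hv0a hv0x hv0y (hm1 a ha) (ha0 x hx) hvy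
                ev0a ev0x ev0y eva evx evy
                (by rintro rfl; exact hv0y hvy)).elim
            · exact (pairE hF hax hay hxy hv0a hv0x hv0y (hm1 a ha) (ha0 x hx) hvy
                ev0a ev0x ev0y eva evx evy
                (by rintro rfl; exact ha0 x hx hv0x)).elim
        · rcases hAmod v hvA with ha1 | ha0
          · by_cases hvy : G.Adj v y
            · exact (pairG hF hax hay hxy hv0a hv0x hv0y (hm0 a ha) (ha1 x hx) hvy
                ev0a ev0x ev0y eva evx evy
                (by rintro rfl; exact hm0 a ha hv0a)).elim
            · exact (pairC hF hax hay hxy (hm0 a ha) (ha1 x hx) hvy hv0a hv0x hv0y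
                eva evx evy ev0a ev0x ev0y
                (by rintro rfl; exact hm0 a ha hv0a)).elim
          · right
            rintro c (hc | hc)
            · exact hm0 c hc
            · exact ha0 c hc
    have huniv : M ∪ MA = Set.univ :=
      G4 hG hGc hM hmod Set.subset_union_left
        (fun h => dMA x (by rw [h]; exact Or.inr hx) hx)
    have : y ∈ M ∪ MA := by rw [huniv]; exact Set.mem_univ y
    rcases this with h | h
    · exact dMB y h hy
    · exact dAB y h hy
  · -- v0 has pattern (0,1,0) : M ∪ MB is a module
    have hmod : IsModule G (M ∪ MB) := by
      intro v hv
      have hvM : v ∉ M := fun h => hv (Or.inl h)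
      have hvB : v ∉ MB := fun h => hv (Or.inr h)
      by_cases hvA : v ∈ MA
      · left
        rintro c (hc | hc)
        · exact (adjMA c hc v hvA).symm
        · exact adjAB v hvA c hc
      · have eva : v ≠ a := fun h => hvM (h ▸ ha)
        have evx : v ≠ x := fun h => hvA (h ▸ hx)
        have evy : v ≠ y := fun h => hvB (h ▸ hy)
        rcases hM.1.1 v hvM with hm1 | hm0
        · rcases hBmod v hvB with hb1 | hb0
          · left
            rintro c (hc | hc)
            · exact hm1 c hc
            · exact hb1 c hc
          · by_cases hvx : G.Adj v x
            · exact (pairC hF hax hay hxy hv0a hv0x hv0y (hm1 a ha) hvx (hb0 y hy)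
                ev0a ev0x ev0y eva evx evy
                (by rintro rfl; exact hv0a (hm1 a ha))).elim
            · exact (pairD hF hax hay hxy hv0a hv0x hv0y (hm1 a ha) hvx (hb0 y hy)
                ev0a ev0x ev0y eva evx evy
                (by rintro rfl; exact hv0a (hm1 a ha))).elim
        · rcases hBmod v hvB with hb1 | hb0
          · by_cases hvx : G.Adj v x
            · exact (pairB hF hax hay hxy hv0a hv0x hv0y (hm0 a ha) hvx (hb1 y hy)
                ev0a ev0x ev0y eva evx evy
                (by rintro rfl; exact hv0y (hb1 y hy))).elim
            · exact (pairA hF hax hay hxy hv0a hv0x hv0y (hm0 a ha) hvx (hb1 y hy)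
                ev0a ev0x ev0y eva evx evy
                (by rintro rfl; exact hvx hv0x)).elim
          · right
            rintro c (hc | hc)
            · exact hm0 c hc
            · exact hb0 c hc
    have huniv : M ∪ MB = Set.univ :=
      G4 hG hGc hM hmod Set.subset_union_left
        (fun h => dMB y (by rw [h]; exact Or.inr hy) hy)
    have : x ∈ M ∪ MB := by rw [huniv]; exact Set.mem_univ x
    rcases this with h | h
    · exact dMA x h hx
    · exact dAB x hx h

lemma caseB3 [Fintype V] (hG : G.Connected) (hGc : Gᶜ.Connected) (hF : FFree G)
    {M M1 M2 : Set V} (hM : IsMaximalStrongModule G M) (hM1 : IsMaximalStrongModule G M1)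
    (hM2mod : IsModule G M2)
    {a x y : V} (ha : a ∈ M) (hx : x ∈ M1) (hy : y ∈ M2)
    (dM1 : ∀ v ∈ M, v ∉ M1) (dM2 : ∀ v ∈ M, v ∉ M2) (d12 : ∀ v ∈ M1, v ∉ M2)
    (adj1 : ∀ p ∈ M, ∀ q ∈ M1, G.Adj p q) (adj2 : ∀ p ∈ M, ∀ q ∈ M2, G.Adj p q)
    (adj12 : ∀ p ∈ M1, ∀ q ∈ M2, G.Adj p q) : False := by
  have hnm : ¬ IsModule G (M1 ∪ M2) := by
    intro hmod
    have h12 : M1 ∪ M2 = Set.univ :=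
      G4 hG hGc hM1 hmod Set.subset_union_left
        (fun h => d12 y (by rw [h]; exact Or.inr hy) hy)
    have : a ∈ M1 ∪ M2 := by rw [h12]; exact Set.mem_univ a
    rcases this with h | h
    · exact dM1 a ha h
    · exact dM2 a ha h
  unfold IsModule at hnm
  push_neg at hnm
  obtain ⟨v0, hv0U, ⟨c1, hc1, hnadj1⟩, c2, hc2, hadj2⟩ := hnm
  have hv01 : v0 ∉ M1 := fun h => hv0U (Or.inl h)
  have hv02 : v0 ∉ M2 := fun h => hv0U (Or.inr h)
  have hv0M : v0 ∉ M := by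
    intro h
    rcases hc1 with hc | hc
    · exact hnadj1 (adj1 v0 h c1 hc)
    · exact hnadj1 (adj2 v0 h c1 hc)
  rcases hM1.1.1 v0 hv01 with h11 | h10 <;> rcases hM2mod v0 hv02 with h21 | h20
  · rcases hc1 with hc | hc
    · exact hnadj1 (h11 c1 hc)
    · exact hnadj1 (h21 c1 hc)
  · exact splitCase hG hGc hF hM hM1.1.1 hM2mod ha hx hy dM1 dM2 d12 adj1 adj2 adj12
      hv0M hv01 hv02 (h11 x hx) (fun h => h20 y hy h)
  · exact splitCase hG hGc hF hM hM2mod hM1.1.1 ha hy hx dM2 dM1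
      (fun v hv hv2 => d12 v hv2 hv) adj2 adj1
      (fun p hp q hq => (adj12 q hq p hp).symm)
      hv0M hv02 hv01 (h21 y hy) (fun h => h10 x hx h)
  · rcases hc2 with hc | hc
    · exact h10 c2 hc hadj2
    · exact h20 c2 hc hadj2

end Split
section Cases
variable {V : Type*} {G : SimpleGraph V}

lemma caseA [Fintype V] (hG : G.Connected) (hF : FFree G)
    (hnp : ¬ ∃ U C1 C2 : Set V,
      Disjoint U C1 ∧ Disjoint U C2 ∧ Disjoint C1 C2 ∧ U ∪ C1 ∪ C2 = Set.univ ∧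
      (∀ u ∈ U, ∀ v : V, v ≠ u → G.Adj u v) ∧
      G.IsClique C1 ∧ G.IsClique C2 ∧ (∀ a ∈ C1, ∀ b ∈ C2, ¬ G.Adj a b))
    {M : Set V} (hM : IsMaximalStrongModule G M)
    {a b x1 x2 : V} (ha : a ∈ M) (hb : b ∈ M) (hab : a ≠ b) (hnadj : ¬ G.Adj a b)
    (hx1 : x1 ∉ M) (hx2 : x2 ∉ M) (hx12 : x1 ≠ x2)
    (hx1adj : ∀ m ∈ M, G.Adj x1 m) (hx2adj : ∀ m ∈ M, G.Adj x2 m) : False := by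
  classical
  set N : Set V := {v | v ∉ M ∧ ∀ m ∈ M, G.Adj v m} with hNdef
  set R : Set V := {v | v ∉ M ∧ ∀ m ∈ M, ¬ G.Adj v m} with hRdef
  have hx1N : x1 ∈ N := ⟨hx1, hx1adj⟩
  have hx2N : x2 ∈ N := ⟨hx2, hx2adj⟩
  have hNR : ∀ v, v ∉ M → v ∈ N ∨ v ∈ R := by
    intro v hv
    rcases hM.1.1 v hv with h | h
    · exact Or.inl ⟨hv, h⟩
    · exact Or.inr ⟨hv, h⟩
  have hNcl : ∀ p ∈ N, ∀ q ∈ N, p ≠ q → G.Adj p q := by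
    intro p hp q hq hne
    by_contra hc
    have h01 : G.Adj a p := (hp.2 a ha).symm
    have h03 : G.Adj a q := (hq.2 a ha).symm
    have h12 : G.Adj p b := hp.2 b hb
    have h23 : G.Adj b q := (hq.2 b hb).symm
    exact hF.1 (copyC4 h01.ne hab h03.ne h12.ne hne h23.ne h01 hnadj h03 h12 hc h23)
  have hRN : ∀ r ∈ R, ∀ n ∈ N, ¬ G.Adj r n := by
    intro r hr n hn hadj
    by_cases hall : ∀ m ∈ N, G.Adj r m
    · have h01 : G.Adj x1 x2 := hNcl x1 hx1N x2 hx2N hx12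
      have h02 : G.Adj x1 a := hx1adj a ha
      have h03 : G.Adj x1 b := hx1adj b hb
      have h04 : G.Adj x1 r := (hall x1 hx1N).symm
      have h12 : G.Adj x2 a := hx2adj a ha
      have h13 : G.Adj x2 b := hx2adj b hb
      have h14 : G.Adj x2 r := (hall x2 hx2N).symm
      have n24 : ¬ G.Adj a r := fun h => hr.2 a ha h.symm
      have n34 : ¬ G.Adj b r := fun h => hr.2 b hb h.symm
      exact hF.2.2.2.1 (copyFox hx12 h02.ne h03.ne h04.ne h12.ne h13.ne h14.ne
        hab (fun h => hr.1 (h ▸ ha)) (fun h => hr.1 (h ▸ hb))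
        h01 h02 h03 h04 h12 h13 h14 hnadj n24 n34)
    · push_neg at hall
      obtain ⟨m, hmN, hrm⟩ := hall
      have hmn : m ≠ n := by rintro rfl; exact hrm hadj
      have h01 : G.Adj n a := hn.2 a ha
      have h02 : G.Adj n m := hNcl n hn m hmN hmn.symm
      have h03 : G.Adj n r := hadj.symm
      have h04 : G.Adj n b := hn.2 b hb
      have h12 : G.Adj a m := (hmN.2 a ha).symm
      have n13 : ¬ G.Adj a r := fun h => hr.2 a ha h.symm
      have n23 : ¬ G.Adj m r := fun h => hrm h.symm
      have h24 : G.Adj m b := hmN.2 b hb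
      have n34 : ¬ G.Adj r b := hr.2 b hb
      exact hF.2.2.1 (copyDart h01.ne h02.ne h03.ne h04.ne h12.ne
        (fun h => hr.1 (h ▸ ha)) hab
        (fun h => hr.2 a ha (h ▸ (hmN.2 a ha))) h24.ne
        (fun h => hr.1 (h.symm ▸ hb))
        h01 h02 h03 h04 h12 n13 hnadj n23 h24 n34)
  have hRe : ∀ r, r ∉ R := by
    intro r hrR
    have hcl : ∀ ⦃v w : V⦄, v ∈ M ∪ N → G.Adj v w → w ∈ M ∪ N := by
      intro v w hv hvw
      by_cases hwM : w ∈ M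
      · exact Or.inl hwM
      rcases hNR w hwM with h | h
      · exact Or.inr h
      · rcases hv with hv | hv
        · exact absurd hvw.symm (h.2 v hv)
        · exact absurd hvw.symm (hRN w h v hv)
    have := reach_mem hcl (Or.inl ha) (hG.preconnected a r)
    rcases this with h | h
    · exact hrR.1 h
    · exact hrR.2 a ha (h.2 a ha)
  obtain ⟨I, X, Y, hcov, hIX, hIY, hXY, hIuniv, hXcl, hYcl, hXYn⟩ :=
    lemL (G := G) M
      (by -- no independent triple in M
        intro p q r hp hq hr hpq hpr hqr npq npr nqr
        have h01 : G.Adj x1 x2 := hNcl x1 hx1N x2 hx2N hx12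
        have h02 : G.Adj x1 p := hx1adj p hp
        have h03 : G.Adj x1 q := hx1adj q hq
        have h04 : G.Adj x1 r := hx1adj r hr
        have h12 : G.Adj x2 p := hx2adj p hp
        have h13 : G.Adj x2 q := hx2adj q hq
        have h14 : G.Adj x2 r := hx2adj r hr
        exact hF.2.2.2.1 (copyFox hx12 h02.ne h03.ne h04.ne h12.ne h13.ne h14.ne
          hpq hpr hqr h01 h02 h03 h04 h12 h13 h14 npq npr nqr))
      (by -- no P4 in M
        intro p q r s hp hq hr hs hpr hps hqs hpq hqr hrs npr nps nqs
        have h04 : G.Adj p x1 := (hx1adj p hp).symm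
        have h14 : G.Adj q x1 := (hx1adj q hq).symm
        have h24 : G.Adj r x1 := (hx1adj r hr).symm
        have h34 : G.Adj s x1 := (hx1adj s hs).symm
        exact hF.2.2.2.2 (copyGem hpq.ne hpr hps h04.ne hqr.ne hqs h14.ne hrs.ne h24.ne h34.ne
          hpq npr nps h04 hqr nqs h14 hrs h24 h34))
      (by -- no C4 in M
        intro p q r s hp hq hr hs hpr hqs hpq hqr hrs hsp npr nqs
        exact hF.1 (copyC4 hpq.ne hpr hsp.ne' hqr.ne hqs hrs.ne hpq npr hsp.symm hqr nqs hrs))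
  -- assemble the forbidden partition
  refine hnp ⟨N ∪ I, X, Y, ?_, ?_, ?_, ?_, ?_, ?_, ?_, ?_⟩
  · rw [Set.disjoint_left]
    rintro v (hv | hv) hvX
    · exact hv.1 (by rw [← hcov]; exact Or.inl (Or.inr hvX))
    · exact hIX v hv hvX
  · rw [Set.disjoint_left]
    rintro v (hv | hv) hvY
    · exact hv.1 (by rw [← hcov]; exact Or.inr hvY)
    · exact hIY v hv hvY
  · rw [Set.disjoint_left]
    intro v hvX hvY
    exact hXY v hvX hvY
  · apply Set.eq_univ_of_forall
    intro v
    by_cases hvM : v ∈ M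
    · have : v ∈ I ∪ X ∪ Y := by rw [hcov]; exact hvM
      rcases this with (h | h) | h
      · exact Or.inl (Or.inl (Or.inr h))
      · exact Or.inl (Or.inr h)
      · exact Or.inr h
    · rcases hNR v hvM with h | h
      · exact Or.inl (Or.inl (Or.inl h))
      · exact absurd h (hRe v)
  · rintro u (hu | hu) v hv
    · by_cases hvM : v ∈ M
      · exact hu.2 v hvM
      · rcases hNR v hvM with h | h
        · exact hNcl u hu v h (Ne.symm hv)
        · exact absurd h (hRe v)
    · have huM : u ∈ M := by rw [← hcov]; exact Or.inl (Or.inl hu)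
      by_cases hvM : v ∈ M
      · exact hIuniv u hu v hvM hv
      · rcases hNR v hvM with h | h
        · exact (h.2 u huM).symm
        · exact absurd h (hRe v)
  · exact fun p hp q hq hne => hXcl p hp q hq hne
  · exact fun p hp q hq hne => hYcl p hp q hq hne
  · exact hXYn

end Cases
section CaseB
variable {V : Type*} {G : SimpleGraph V}

lemma caseB [Fintype V] (hG : G.Connected) (hF : FFree G)
    (hnp : ¬ ∃ U C1 C2 : Set V,
      Disjoint U C1 ∧ Disjoint U C2 ∧ Disjoint C1 C2 ∧ U ∪ C1 ∪ C2 = Set.univ ∧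
      (∀ u ∈ U, ∀ v : V, v ≠ u → G.Adj u v) ∧
      G.IsClique C1 ∧ G.IsClique C2 ∧ (∀ a ∈ C1, ∀ b ∈ C2, ¬ G.Adj a b))
    {M MA MB : Set V} (hM : IsMaximalStrongModule G M)
    (hMA : IsMaximalStrongModule G MA) (hMB : IsMaximalStrongModule G MB)
    (hneA : MA ≠ M) (hneB : MB ≠ M) (hneAB : MA ≠ MB)
    (hcl : ∀ p ∈ M, ∀ q ∈ M, p ≠ q → G.Adj p q)
    {a b : V} (ha : a ∈ M) (hb : b ∈ M) (hab : a ≠ b)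
    (adjA : ∀ p ∈ M, ∀ q ∈ MA, G.Adj p q) (adjB : ∀ p ∈ M, ∀ q ∈ MB, G.Adj p q)
    (adjAB : ∀ p ∈ MA, ∀ q ∈ MB, G.Adj p q) : False := by
  classical
  obtain ⟨x, hx⟩ := hMA.2.1
  obtain ⟨y, hy⟩ := hMB.2.1
  have d1 : ∀ v ∈ M, v ∉ MA := msm_disjoint hM hMA (Ne.symm hneA)
  have d2 : ∀ v ∈ M, v ∉ MB := msm_disjoint hM hMB (Ne.symm hneB)
  have d12 : ∀ v ∈ MA, v ∉ MB := msm_disjoint hMA hMB hneAB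
  by_cases hcc : Gᶜ.Connected
  · exact caseB3 hG hcc hF hM hMA hMB.1.1 ha hx hy d1 d2 d12 adjA adjB adjAB
  · -- co-component of a
    set C : Set V := {v | Gᶜ.Reachable a v} with hCdef
    have haC : a ∈ C := Reachable.refl a
    have hCmod : IsModule G C := by
      intro v hv
      left
      intro c hc
      by_contra hnadj
      have hvc : v ≠ c := by rintro rfl; exact hv hc
      exact hv (hc.trans (SimpleGraph.Adj.reachable (by rw [SimpleGraph.compl_adj]; exact ⟨hvc.symm, fun h => hnadj h.symm⟩)))
    rcases hM.1.2 C hCmod ⟨a, ha, haC⟩ with hMC | hCM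
    · by_cases hCu : C = Set.univ
      · have hne : Nonempty V := ⟨a⟩
        refine hcc ⟨fun u v => ?_⟩
        have hu : u ∈ C := by rw [hCu]; exact Set.mem_univ u
        have hv : v ∈ C := by rw [hCu]; exact Set.mem_univ v
        exact (hu : Gᶜ.Reachable a u).symm.trans hv
      · have hCstrong : IsStrongModule G C := by
          refine ⟨hCmod, ?_⟩
          intro Z hZ hCZ
          by_cases hZC : Z ⊆ C
          · exact Or.inr hZC
          · left
            obtain ⟨z, hzZ, hzC⟩ := Set.not_subset.mp hZC
            obtain ⟨c0, hc0C, hc0Z⟩ := hCZ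
            intro c hcC
            have hclosed : ∀ ⦃p q : V⦄, p ∈ {v | v ∈ Z ∧ v ∈ C} → Gᶜ.Adj p q →
                q ∈ {v | v ∈ Z ∧ v ∈ C} := by
              intro p q hp hpq
              have hqC : q ∈ C := Reachable.trans (hp.2 : Gᶜ.Reachable a p) hpq.reachable
              refine ⟨?_, hqC⟩
              by_contra hqZ
              have hnone : ∀ c' ∈ Z, ¬ G.Adj q c' :=
                isModule_none hZ hqZ hp.1 (fun h => hpq.2 h.symm)
              have hqz : Gᶜ.Adj q z := by
                rw [SimpleGraph.compl_adj]
                exact ⟨fun h => hzC (h ▸ hqC), hnone z hzZ⟩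
              exact hzC (hqC.trans hqz.reachable)
            exact (reach_mem hclosed ⟨hc0Z, hc0C⟩
              (Reachable.trans (hc0C : Gᶜ.Reachable a c0).symm hcC)).1
        by_cases hMeqC : M = C
        · have hbC : b ∈ C := hMeqC ▸ hb
          obtain ⟨w⟩ := (hbC : Gᶜ.Reachable a b)
          cases w with
          | nil => exact hab rfl
          | @cons _ d _ h' p =>
            have hdC : d ∈ C := h'.reachable
            rw [← hMeqC] at hdC
            exact h'.2 (hcl a ha d hdC h'.1)
        · exact hCu (hM.2.2.2 C hCstrong ⟨hMC, fun h => hMeqC (Set.Subset.antisymm hMC h)⟩)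
    · -- a is universal
      have hauniv : ∀ v, v ≠ a → G.Adj a v := by
        intro v hv
        by_contra hnadj
        have hvC : v ∈ C := SimpleGraph.Adj.reachable
          (by rw [SimpleGraph.compl_adj]; exact ⟨fun h => hv h.symm, hnadj⟩)
        exact hnadj (hcl a ha v (hCM hvC) (fun h => hv h.symm))
      have hNadj : ∀ v, v ∉ M → ∀ m ∈ M, G.Adj v m := by
        intro v hv
        exact isModule_all hM.1.1 hv ha (hauniv v (fun h => hv (h ▸ ha))).symm
      have habAdj : G.Adj a b := hcl a ha b hb hab
      obtain ⟨I, X, Y, hcov, hIX, hIY, hXY, hIuniv, hXcl, hYcl, hXYn⟩ :=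
        lemL (G := G) {v | v ∉ M}
          (by
            intro p q r hp hq hr hpq hpr hqr npq npr nqr
            have h02 : G.Adj a p := (hNadj p hp a ha).symm
            have h03 : G.Adj a q := (hNadj q hq a ha).symm
            have h04 : G.Adj a r := (hNadj r hr a ha).symm
            have h12 : G.Adj b p := (hNadj p hp b hb).symm
            have h13 : G.Adj b q := (hNadj q hq b hb).symm
            have h14 : G.Adj b r := (hNadj r hr b hb).symm
            exact hF.2.2.2.1 (copyFox hab h02.ne h03.ne h04.ne h12.ne h13.ne h14.ne
              hpq hpr hqr habAdj h02 h03 h04 h12 h13 h14 npq npr nqr))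
          (by
            intro p q r s hp hq hr hs hpr hps hqs hpq hqr hrs npr nps nqs
            have h04 : G.Adj p a := hNadj p hp a ha
            have h14 : G.Adj q a := hNadj q hq a ha
            have h24 : G.Adj r a := hNadj r hr a ha
            have h34 : G.Adj s a := hNadj s hs a ha
            exact hF.2.2.2.2 (copyGem hpq.ne hpr hps h04.ne hqr.ne hqs h14.ne hrs.ne h24.ne h34.ne
              hpq npr nps h04 hqr nqs h14 hrs h24 h34))
          (by
            intro p q r s hp hq hr hs hpr hqs hpq hqr hrs hsp npr nqs
            exact hF.1 (copyC4 hpq.ne hpr hsp.ne' hqr.ne hqs hrs.ne hpq npr hsp.symm hqr nqs hrs))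
      refine hnp ⟨M ∪ I, X, Y, ?_, ?_, ?_, ?_, ?_, ?_, ?_, ?_⟩
      · rw [Set.disjoint_left]
        rintro v (hv | hv) hvX
        · exact (show v ∈ {u | u ∉ M} from by rw [← hcov]; exact Or.inl (Or.inr hvX)) hv
        · exact hIX v hv hvX
      · rw [Set.disjoint_left]
        rintro v (hv | hv) hvY
        · exact (show v ∈ {u | u ∉ M} from by rw [← hcov]; exact Or.inr hvY) hv
        · exact hIY v hv hvY
      · rw [Set.disjoint_left]
        intro v hvX hvY
        exact hXY v hvX hvY
      · apply Set.eq_univ_of_forall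
        intro v
        by_cases hvM : v ∈ M
        · exact Or.inl (Or.inl (Or.inl hvM))
        · have : v ∈ I ∪ X ∪ Y := by rw [hcov]; exact hvM
          rcases this with (h | h) | h
          · exact Or.inl (Or.inl (Or.inr h))
          · exact Or.inl (Or.inr h)
          · exact Or.inr h
      · rintro u (hu | hu) v hv
        · by_cases hvM : v ∈ M
          · exact hcl u hu v hvM (Ne.symm hv)
          · exact (hNadj v hvM u hu).symm
        · have huM : u ∈ {v | v ∉ M} := by rw [← hcov]; exact Or.inl (Or.inl hu)
          by_cases hvM : v ∈ M
          · exact hNadj u huM v hvM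
          · exact hIuniv u hu v hvM hv
      · exact fun p hp q hq hne => hXcl p hp q hq hne
      · exact fun p hp q hq hne => hYcl p hp q hq hne
      · exact hXYn

end CaseB
/-- Under the same hypotheses, every maximal strong module adjacent
(in the quotient graph) to more than two other maximal strong modules is a
single vertex. -/
theorem stmt_5 {V : Type*} [Fintype V] (G : SimpleGraph V) (hconn : G.Connected)
    (hF : FFree G) (hnc : ¬ G.IsClique (Set.univ : Set V))
    (hnp : ¬ ∃ U C1 C2 : Set V,
      Disjoint U C1 ∧ Disjoint U C2 ∧ Disjoint C1 C2 ∧ U ∪ C1 ∪ C2 = Set.univ ∧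
      (∀ u ∈ U, ∀ v : V, v ≠ u → G.Adj u v) ∧
      G.IsClique C1 ∧ G.IsClique C2 ∧ (∀ a ∈ C1, ∀ b ∈ C2, ¬ G.Adj a b)) :
    ∀ M : Set V, IsMaximalStrongModule G M →
      2 < {M' : Set V | IsMaximalStrongModule G M' ∧ M' ≠ M ∧
            ∀ a ∈ M, ∀ b ∈ M', G.Adj a b}.ncard →
      ∃ v : V, M = {v} := by
  classical
  intro M hM hdeg
  by_contra hsing
  obtain ⟨a, ha⟩ := hM.2.1
  obtain ⟨b, hb, hba⟩ : ∃ b ∈ M, b ≠ a := by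
    by_contra hc
    push_neg at hc
    exact hsing ⟨a, Set.eq_singleton_iff_unique_mem.mpr ⟨ha, hc⟩⟩
  set S : Set (Set V) := {M' : Set V | IsMaximalStrongModule G M' ∧ M' ≠ M ∧
      ∀ a ∈ M, ∀ b ∈ M', G.Adj a b} with hSdef
  have hfin : S.Finite := Set.toFinite _
  obtain ⟨M1, hM1S⟩ : S.Nonempty := Set.nonempty_of_ncard_ne_zero (by omega)
  have hfin2 : (S \ {M1}).Finite := hfin.subset Set.diff_subset
  have hc1 : (S \ {M1}).ncard = S.ncard - 1 := Set.ncard_diff_singleton_of_mem hM1S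
  obtain ⟨M2, hM2S⟩ : (S \ {M1}).Nonempty := Set.nonempty_of_ncard_ne_zero (by omega)
  have hc2 : ((S \ {M1}) \ {M2}).ncard = (S \ {M1}).ncard - 1 :=
    Set.ncard_diff_singleton_of_mem hM2S
  obtain ⟨M3, hM3S⟩ : ((S \ {M1}) \ {M2}).Nonempty := Set.nonempty_of_ncard_ne_zero (by omega)
  have hM1p : IsMaximalStrongModule G M1 ∧ M1 ≠ M ∧ ∀ p ∈ M, ∀ q ∈ M1, G.Adj p q := hM1S
  have hM2p : IsMaximalStrongModule G M2 ∧ M2 ≠ M ∧ ∀ p ∈ M, ∀ q ∈ M2, G.Adj p q := hM2S.1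
  have hM3p : IsMaximalStrongModule G M3 ∧ M3 ≠ M ∧ ∀ p ∈ M, ∀ q ∈ M3, G.Adj p q := hM3S.1.1
  have hne12 : M1 ≠ M2 := fun h => hM2S.2 (by rw [← h]; rfl)
  have hne13 : M1 ≠ M3 := fun h => hM3S.1.2 (by rw [← h]; rfl)
  have hne23 : M2 ≠ M3 := fun h => hM3S.2 (by rw [← h]; rfl)
  obtain ⟨x1, hx1⟩ := hM1p.1.2.1
  obtain ⟨x2, hx2⟩ := hM2p.1.2.1
  obtain ⟨x3, hx3⟩ := hM3p.1.2.1
  have d1 : ∀ v ∈ M, v ∉ M1 := msm_disjoint hM hM1p.1 (Ne.symm hM1p.2.1)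
  have d2 : ∀ v ∈ M, v ∉ M2 := msm_disjoint hM hM2p.1 (Ne.symm hM2p.2.1)
  have d3 : ∀ v ∈ M, v ∉ M3 := msm_disjoint hM hM3p.1 (Ne.symm hM3p.2.1)
  have d12 : ∀ v ∈ M1, v ∉ M2 := msm_disjoint hM1p.1 hM2p.1 hne12
  have d13 : ∀ v ∈ M1, v ∉ M3 := msm_disjoint hM1p.1 hM3p.1 hne13
  have d23 : ∀ v ∈ M2, v ∉ M3 := msm_disjoint hM2p.1 hM3p.1 hne23
  by_cases hclq : ∀ p ∈ M, ∀ q ∈ M, p ≠ q → G.Adj p q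
  · -- M is a clique
    by_cases h12 : G.Adj x1 x2
    · exact caseB hconn hF hnp hM hM1p.1 hM2p.1 hM1p.2.1 hM2p.2.1 hne12 hclq ha hb
        (Ne.symm hba) hM1p.2.2 hM2p.2.2
        (cross_full hM1p.1.1.1 hM2p.1.1.1 d12 hx1 hx2 h12)
    · by_cases h13 : G.Adj x1 x3
      · exact caseB hconn hF hnp hM hM1p.1 hM3p.1 hM1p.2.1 hM3p.2.1 hne13 hclq ha hb
          (Ne.symm hba) hM1p.2.2 hM3p.2.2
          (cross_full hM1p.1.1.1 hM3p.1.1.1 d13 hx1 hx3 h13)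
      · by_cases h23 : G.Adj x2 x3
        · exact caseB hconn hF hnp hM hM2p.1 hM3p.1 hM2p.2.1 hM3p.2.1 hne23 hclq ha hb
            (Ne.symm hba) hM2p.2.2 hM3p.2.2
            (cross_full hM2p.1.1.1 hM3p.1.1.1 d23 hx2 hx3 h23)
        · -- fox on a b x1 x2 x3
          have habAdj : G.Adj a b := hclq a ha b hb (Ne.symm hba)
          have h02 : G.Adj a x1 := hM1p.2.2 a ha x1 hx1
          have h03 : G.Adj a x2 := hM2p.2.2 a ha x2 hx2
          have h04 : G.Adj a x3 := hM3p.2.2 a ha x3 hx3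
          have h12' : G.Adj b x1 := hM1p.2.2 b hb x1 hx1
          have h13' : G.Adj b x2 := hM2p.2.2 b hb x2 hx2
          have h14' : G.Adj b x3 := hM3p.2.2 b hb x3 hx3
          exact hF.2.2.2.1 (copyFox (Ne.symm hba) h02.ne h03.ne h04.ne h12'.ne h13'.ne h14'.ne
            (fun h => d12 x1 hx1 (h.symm ▸ hx2)) (fun h => d13 x1 hx1 (h.symm ▸ hx3))
            (fun h => d23 x2 hx2 (h.symm ▸ hx3))
            habAdj h02 h03 h04 h12' h13' h14' h12 h13 h23)
  · push_neg at hclq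
    obtain ⟨p, hp, q, hq, hpq, hnadj⟩ := hclq
    have hx1M : x1 ∉ M := fun h => d1 x1 h hx1
    have hx2M : x2 ∉ M := fun h => d2 x2 h hx2
    have hx12 : x1 ≠ x2 := fun h => d12 x1 hx1 (h.symm ▸ hx2)
    exact caseA hconn hF hnp hM hp hq hpq hnadj hx1M hx2M hx12
      (fun m hm => (hM1p.2.2 m hm x1 hx1).symm)
      (fun m hm => (hM2p.2.2 m hm x2 hx2).symm)
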